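/- arXiv:2506.04566 — 3 statements merged into one kernel-verified Lean document; each statement's English description precedes it below -/
import Mathlib

section
/- Let X be a finite nonempty set and let Z and Z' be neighboring finite multisets of vectors z : X → ℝ with |Z| ≥ 3. Then for every x ∈ X, leftmed(Z)_x ≤ med(Z')_x ≤ rightmed(Z)_x. -/
open Real

/-- The left-median of a finite multiset of reals (see context):
    for sorted values `s_1 ≤ … ≤ s_N`, this is `s_k` when `N = 2k` or `N = 2k+1` (`N ≥ 2`),
    and `s_1` when `N = 1`. (0-indexed: `N/2 - 1`.) -/
noncomputable def leftmed (S : Multiset ℝ) : ℝ :=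
  if S.card = 1 then (S.sort (· ≤ ·)).getD 0 0
  else (S.sort (· ≤ ·)).getD (S.card / 2 - 1) 0

/-- The right-median: `s_{k+1}` when `N = 2k`, `s_{k+2}` when `N = 2k+1 ≥ 3`, `s_1` when `N = 1`. -/
noncomputable def rightmed (S : Multiset ℝ) : ℝ :=
  if S.card = 1 then (S.sort (· ≤ ·)).getD 0 0
  else if S.card % 2 = 0 then (S.sort (· ≤ ·)).getD (S.card / 2) 0
  else (S.sort (· ≤ ·)).getD (S.card / 2 + 1) 0

/-- The median: `(s_k + s_{k+1})/2` when `N = 2k`, `s_{k+1}` when `N = 2k+1`. -/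
noncomputable def med (S : Multiset ℝ) : ℝ :=
  if S.card = 1 then (S.sort (· ≤ ·)).getD 0 0
  else if S.card % 2 = 0 then
    ((S.sort (· ≤ ·)).getD (S.card / 2 - 1) 0 + (S.sort (· ≤ ·)).getD (S.card / 2) 0) / 2
  else (S.sort (· ≤ ·)).getD (S.card / 2) 0
/-- Two finite multisets are neighbors if one is obtained from the other by adding a single
    element (equivalently their symmetric difference has size 1). -/
def Neighbors {α : Type*} (Z Z' : Multiset α) : Prop :=
  (∃ a, Z' = a ::ₘ Z) ∨ (∃ a, Z = a ::ₘ Z')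

/-- The multiset `Z^{(x)}` of `x`-th components of a multiset of vectors. -/
def compAt {X : Type*} (Z : Multiset (X → ℝ)) (x : X) : Multiset ℝ :=
  Z.map (fun z => z x)

/-- Componentwise left-median of a multiset of vectors. -/
noncomputable def leftmedVec {X : Type*} (Z : Multiset (X → ℝ)) : X → ℝ :=
  fun x => leftmed (compAt Z x)

/-- Componentwise median of a multiset of vectors. -/
noncomputable def medVec {X : Type*} (Z : Multiset (X → ℝ)) : X → ℝ :=
  fun x => med (compAt Z x)

/-- Componentwise right-median of a multiset of vectors. -/
noncomputable def rightmedVec {X : Type*} (Z : Multiset (X → ℝ)) : X → ℝ :=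
  fun x => rightmed (compAt Z x)


/- auxiliary lemmas -/

lemma sorted_getD_mono {l : List ℝ} (hl : l.Pairwise (· ≤ ·)) {i j : ℕ}
    (hij : i ≤ j) (hj : j < l.length) : l.getD i 0 ≤ l.getD j 0 := by
  rw [List.getD_eq_get _ _ ⟨i, lt_of_le_of_lt hij hj⟩, List.getD_eq_get _ _ ⟨j, hj⟩]
  exact hl.rel_get_of_le (by exact hij)

lemma sublist_getD_le {l l' : List ℝ} (h : List.Sublist l l') (hl' : l'.Pairwise (· ≤ ·)) :
    ∀ i, i < l.length → l'.getD i 0 ≤ l.getD i 0 := by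
  induction h with
  | slnil => intro i hi; simp at hi
  | @cons l₁ l₂ a h ih =>
    intro i hi
    have hlen : l₁.length ≤ l₂.length := h.length_le
    have h1 : (a :: l₂).getD i 0 ≤ (a :: l₂).getD (i + 1) 0 :=
      sorted_getD_mono hl' (Nat.le_succ i) (by simpa using lt_of_lt_of_le hi hlen)
    rw [List.getD_cons_succ] at h1
    exact le_trans h1 (ih (List.pairwise_cons.mp hl').2 i hi)
  | @cons_cons l₁ l₂ a h ih =>
    intro i hi
    cases i with
    | zero => simp
    | succ j =>
      rw [List.getD_cons_succ, List.getD_cons_succ]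
      exact ih (List.pairwise_cons.mp hl').2 j (by simpa using hi)

lemma le_sublist_getD {l l' : List ℝ} (h : List.Sublist l l') (hl' : l'.Pairwise (· ≤ ·)) :
    ∀ i, i < l.length → l.getD i 0 ≤ l'.getD (i + (l'.length - l.length)) 0 := by
  induction h with
  | slnil => intro i hi; simp at hi
  | @cons l₁ l₂ a h ih =>
    intro i hi
    have hlen : l₁.length ≤ l₂.length := h.length_le
    have hd : i + ((a :: l₂).length - l₁.length) = (i + (l₂.length - l₁.length)) + 1 := by
      simp only [List.length_cons]; omega
    rw [hd, List.getD_cons_succ]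
    exact ih (List.pairwise_cons.mp hl').2 i hi
  | @cons_cons l₁ l₂ a h ih =>
    intro i hi
    have hlen : l₁.length ≤ l₂.length := h.length_le
    have hd : (a :: l₂).length - (a :: l₁).length = l₂.length - l₁.length := by
      simp only [List.length_cons]; omega
    rw [hd]
    cases i with
    | zero =>
      rw [List.getD_cons_zero]
      rcases Nat.eq_zero_or_pos (l₂.length - l₁.length) with h0 | h0
      · simp [h0]
      · obtain ⟨e, he⟩ : ∃ e, l₂.length - l₁.length = e + 1 := ⟨_, (Nat.succ_pred_eq_of_pos h0).symm⟩
        rw [Nat.zero_add, he, List.getD_cons_succ]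
        have helt : e < l₂.length := by omega
        rw [List.getD_eq_get _ _ ⟨e, helt⟩]
        exact (List.pairwise_cons.mp hl').1 _ (List.get_mem _ _)
    | succ j =>
      rw [List.getD_cons_succ]
      have : j + 1 + (l₂.length - l₁.length) = (j + (l₂.length - l₁.length)) + 1 := by omega
      rw [this, List.getD_cons_succ]
      exact ih (List.pairwise_cons.mp hl').2 j (by simpa using hi)


lemma sort_sublist_of_le {S T : Multiset ℝ} (h : S ≤ T) :
    List.Sublist (S.sort (· ≤ ·)) (T.sort (· ≤ ·)) := by
  apply List.sublist_of_subperm_of_pairwise ?_ (Multiset.pairwise_sort _ _)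
    (Multiset.pairwise_sort _ _)
  rw [← Multiset.coe_le, Multiset.sort_eq, Multiset.sort_eq]
  exact h

lemma scalarA (S : Multiset ℝ) (a : ℝ) (h : 3 ≤ Multiset.card S) :
    leftmed S ≤ med (a ::ₘ S) ∧ med (a ::ₘ S) ≤ rightmed S := by
  have hcard' : Multiset.card (a ::ₘ S) = Multiset.card S + 1 := Multiset.card_cons _ _
  set n := Multiset.card S with hn
  set l := S.sort (· ≤ ·) with hl
  set l' := (a ::ₘ S).sort (· ≤ ·) with hl'
  have hsub : List.Sublist l l' := sort_sublist_of_le (Multiset.le_cons_self S a)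
  have hsort : l'.Pairwise (· ≤ ·) := Multiset.pairwise_sort _ _
  have hlsort : l.Pairwise (· ≤ ·) := Multiset.pairwise_sort _ _
  have hlen : l.length = n := Multiset.length_sort _
  have hlen' : l'.length = n + 1 := by rw [hl', Multiset.length_sort, hcard']
  have hdiff : l'.length - l.length = 1 := by omega
  have low : ∀ i, i < n → l'.getD i 0 ≤ l.getD i 0 := fun i hi =>
    sublist_getD_le hsub hsort i (by omega)
  have up : ∀ i, i < n → l.getD i 0 ≤ l'.getD (i + 1) 0 := fun i hi => by
    have h2 := le_sublist_getD hsub hsort i (by omega)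
    rwa [hdiff] at h2
  have hL : leftmed S = l.getD (n / 2 - 1) 0 := by
    simp only [leftmed, ← hn, ← hl]; rw [if_neg (by omega)]
  rcases Nat.even_or_odd' n with ⟨k, hk | hk⟩
  · have hM : med (a ::ₘ S) = l'.getD k 0 := by
      simp only [med, hcard', ← hn, ← hl']
      rw [if_neg (by omega), if_neg (by omega), show (n + 1) / 2 = k by omega]
    have hR : rightmed S = l.getD k 0 := by
      simp only [rightmed, ← hn, ← hl]
      rw [if_neg (by omega), if_pos (by omega), show n / 2 = k by omega]
    constructor
    · rw [hL, hM]
      have h1 := up (n / 2 - 1) (by omega)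
      rwa [show n / 2 - 1 + 1 = k by omega] at h1
    · rw [hM, hR]; exact low k (by omega)
  · have hM : med (a ::ₘ S) = (l'.getD k 0 + l'.getD (k + 1) 0) / 2 := by
      simp only [med, hcard', ← hn, ← hl']
      rw [if_neg (by omega), if_pos (by omega), show (n + 1) / 2 - 1 = k by omega,
        show (n + 1) / 2 = k + 1 by omega]
    have hR : rightmed S = l.getD (k + 1) 0 := by
      simp only [rightmed, ← hn, ← hl]
      rw [if_neg (by omega), if_neg (by omega), show n / 2 + 1 = k + 1 by omega]
    have a1 : l.getD (k - 1) 0 ≤ l'.getD k 0 := by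
      have h1 := up (k - 1) (by omega); rwa [show k - 1 + 1 = k by omega] at h1
    have a2 : l.getD (k - 1) 0 ≤ l.getD k 0 := sorted_getD_mono hlsort (by omega) (by omega)
    have a3 : l.getD k 0 ≤ l'.getD (k + 1) 0 := up k (by omega)
    have b1 : l'.getD k 0 ≤ l.getD k 0 := low k (by omega)
    have b2 : l.getD k 0 ≤ l.getD (k + 1) 0 := sorted_getD_mono hlsort (by omega) (by omega)
    have b3 : l'.getD (k + 1) 0 ≤ l.getD (k + 1) 0 := low (k + 1) (by omega)
    constructor
    · rw [hL, hM, show n / 2 - 1 = k - 1 by omega]; linarith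
    · rw [hM, hR]; linarith

lemma scalarB (S : Multiset ℝ) (a : ℝ) (h : 2 ≤ Multiset.card S) :
    leftmed (a ::ₘ S) ≤ med S ∧ med S ≤ rightmed (a ::ₘ S) := by
  have hcard' : Multiset.card (a ::ₘ S) = Multiset.card S + 1 := Multiset.card_cons _ _
  set n := Multiset.card S with hn
  set l := S.sort (· ≤ ·) with hl
  set l' := (a ::ₘ S).sort (· ≤ ·) with hl'
  have hsub : List.Sublist l l' := sort_sublist_of_le (Multiset.le_cons_self S a)
  have hsort : l'.Pairwise (· ≤ ·) := Multiset.pairwise_sort _ _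
  have hlsort : l.Pairwise (· ≤ ·) := Multiset.pairwise_sort _ _
  have hlen : l.length = n := Multiset.length_sort _
  have hlen' : l'.length = n + 1 := by rw [hl', Multiset.length_sort, hcard']
  have hdiff : l'.length - l.length = 1 := by omega
  have low : ∀ i, i < n → l'.getD i 0 ≤ l.getD i 0 := fun i hi =>
    sublist_getD_le hsub hsort i (by omega)
  have up : ∀ i, i < n → l.getD i 0 ≤ l'.getD (i + 1) 0 := fun i hi => by
    have h2 := le_sublist_getD hsub hsort i (by omega)
    rwa [hdiff] at h2
  rcases Nat.even_or_odd' n with ⟨k, hk | hk⟩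
  · have hk1 : 1 ≤ k := by omega
    have hM : med S = (l.getD (k - 1) 0 + l.getD k 0) / 2 := by
      simp only [med, ← hn, ← hl]
      rw [if_neg (by omega), if_pos (by omega), show n / 2 - 1 = k - 1 by omega,
        show n / 2 = k by omega]
    have hL : leftmed (a ::ₘ S) = l'.getD (k - 1) 0 := by
      simp only [leftmed, hcard', ← hn, ← hl']
      rw [if_neg (by omega), show (n + 1) / 2 - 1 = k - 1 by omega]
    have hR : rightmed (a ::ₘ S) = l'.getD (k + 1) 0 := by
      simp only [rightmed, hcard', ← hn, ← hl']
      rw [if_neg (by omega), if_neg (by omega), show (n + 1) / 2 + 1 = k + 1 by omega]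
    have a1 : l'.getD (k - 1) 0 ≤ l.getD (k - 1) 0 := low (k - 1) (by omega)
    have a2 : l.getD (k - 1) 0 ≤ l.getD k 0 := sorted_getD_mono hlsort (by omega) (by omega)
    have a3 : l.getD (k - 1) 0 ≤ l'.getD k 0 := by
      have h1 := up (k - 1) (by omega); rwa [show k - 1 + 1 = k by omega] at h1
    have b1 : l.getD k 0 ≤ l'.getD (k + 1) 0 := up k (by omega)
    have b2 : l'.getD k 0 ≤ l'.getD (k + 1) 0 := sorted_getD_mono hsort (by omega) (by omega)
    constructor
    · rw [hL, hM]; linarith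
    · rw [hM, hR]; linarith
  · have hM : med S = l.getD k 0 := by
      simp only [med, ← hn, ← hl]
      rw [if_neg (by omega), if_neg (by omega), show n / 2 = k by omega]
    have hL : leftmed (a ::ₘ S) = l'.getD k 0 := by
      simp only [leftmed, hcard', ← hn, ← hl']
      rw [if_neg (by omega), show (n + 1) / 2 - 1 = k by omega]
    have hR : rightmed (a ::ₘ S) = l'.getD (k + 1) 0 := by
      simp only [rightmed, hcard', ← hn, ← hl']
      rw [if_neg (by omega), if_pos (by omega), show (n + 1) / 2 = k + 1 by omega]
    constructor
    · rw [hL, hM]; exact low k (by omega)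
    · rw [hM, hR]; exact up k (by omega)

/-- For neighboring finite multisets `Z, Z'` of vectors in `ℝ^X`
    with `|Z| ≥ 3`: for every `x ∈ X`, `leftmed(Z)_x ≤ med(Z')_x ≤ rightmed(Z)_x`. -/
theorem leftmedVec_le_medVec_neighbor_le_rightmedVec
    {X : Type*} [Fintype X] [Nonempty X]
    (Z Z' : Multiset (X → ℝ)) (hZZ' : Neighbors Z Z') (hZ : 3 ≤ Z.card) :
    ∀ x : X, leftmedVec Z x ≤ medVec Z' x ∧ medVec Z' x ≤ rightmedVec Z x := by
  intro x
  rcases hZZ' with ⟨a, rfl⟩ | ⟨a, rfl⟩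
  · have hc : 3 ≤ Multiset.card (compAt Z x) := by rwa [compAt, Multiset.card_map]
    have heq : compAt (a ::ₘ Z) x = (a x) ::ₘ compAt Z x := by simp [compAt]
    simp only [leftmedVec, medVec, rightmedVec, heq]
    exact scalarA _ _ hc
  · have hc : 2 ≤ Multiset.card (compAt Z' x) := by
      rw [compAt, Multiset.card_map]
      rw [Multiset.card_cons] at hZ
      omega
    have heq : compAt (a ::ₘ Z') x = (a x) ::ₘ compAt Z' x := by simp [compAt]
    simp only [leftmedVec, medVec, rightmedVec, heq]
    exact scalarB _ _ hc
end

section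
/- Let X be a finite nonempty set and let Z and Z' be neighboring finite multisets of vectors z : X → ℝ with |Z| ≥ 3. Then for every x ∈ X, |med(Z')_x − med(Z)_x| ≤ rightmed(Z)_x − leftmed(Z)_x; that is, the local sensitivity of the componentwise median of Z is bounded by the median gap of Z. -/
open Real

lemma oi_getD_le (a : ℝ) : ∀ (l : List ℝ), l.Pairwise (· ≤ ·) → ∀ i, i < l.length →
    (l.orderedInsert (· ≤ ·) a).getD i 0 ≤ l.getD i 0
  | [], _, i, hi => by simp at hi
  | b :: t, hs, i, hi => by
    rw [List.orderedInsert]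
    split_ifs with h
    · match i with
      | 0 => simpa using h
      | (j+1) =>
        simp only [List.getD_cons_succ]
        exact sorted_getD_mono hs (Nat.le_succ j) hi
    · match i with
      | 0 => simp
      | (j+1) =>
        simp only [List.getD_cons_succ]
        exact oi_getD_le a t hs.of_cons j (by simpa using hi)

lemma getD_le_oi (a : ℝ) : ∀ (l : List ℝ), l.Pairwise (· ≤ ·) → ∀ i, i < l.length →
    l.getD i 0 ≤ (l.orderedInsert (· ≤ ·) a).getD (i+1) 0
  | [], _, i, hi => by simp at hi
  | b :: t, hs, i, hi => by
    rw [List.orderedInsert]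
    split_ifs with h
    · simp
    · match i with
      | 0 =>
        simp only [List.getD_cons_succ, List.getD_cons_zero]
        have hlen : 0 < (t.orderedInsert (· ≤ ·) a).length := by
          rw [List.orderedInsert_length]; omega
        rw [List.getD_eq_getElem _ 0 hlen]
        have hmem : (t.orderedInsert (· ≤ ·) a)[0] ∈ t.orderedInsert (· ≤ ·) a :=
          List.getElem_mem hlen
        rw [List.mem_orderedInsert] at hmem
        rcases hmem with he | hmem
        · rw [he]; exact le_of_not_ge h
        · exact List.rel_of_pairwise_cons hs hmem
      | (j+1) =>
        simp only [List.getD_cons_succ]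
        exact getD_le_oi a t hs.of_cons j (by simpa using hi)

lemma sort_cons_eq (a : ℝ) (S : Multiset ℝ) :
    (a ::ₘ S).sort (· ≤ ·) = (S.sort (· ≤ ·)).orderedInsert (· ≤ ·) a := by
  apply List.Perm.eq_of_pairwise' (Multiset.pairwise_sort _ _)
    ((Multiset.pairwise_sort S _).orderedInsert a _) ?_
  rw [← Multiset.coe_eq_coe, Multiset.sort_eq,
    Multiset.coe_eq_coe.mpr (List.perm_orderedInsert _ a _), ← Multiset.cons_coe,
    Multiset.sort_eq]

lemma sort_cons_getD_le (a : ℝ) (S : Multiset ℝ) {i : ℕ} (hi : i < S.card) :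
    ((a ::ₘ S).sort (· ≤ ·)).getD i 0 ≤ (S.sort (· ≤ ·)).getD i 0 := by
  rw [sort_cons_eq]
  exact oi_getD_le a _ (Multiset.pairwise_sort S _) i (by rwa [Multiset.length_sort])

lemma getD_le_sort_cons (a : ℝ) (S : Multiset ℝ) {i : ℕ} (hi : i < S.card) :
    (S.sort (· ≤ ·)).getD i 0 ≤ ((a ::ₘ S).sort (· ≤ ·)).getD (i + 1) 0 := by
  rw [sort_cons_eq]
  exact getD_le_oi a _ (Multiset.pairwise_sort S _) i (by rwa [Multiset.length_sort])

lemma msort_mono (S : Multiset ℝ) {i j : ℕ} (hij : i ≤ j) (hj : j < S.card) :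
    (S.sort (· ≤ ·)).getD i 0 ≤ (S.sort (· ≤ ·)).getD j 0 :=
  sorted_getD_mono (Multiset.pairwise_sort S _) hij (by rwa [Multiset.length_sort])

lemma med_insert (S : Multiset ℝ) (a : ℝ) (hS : 3 ≤ S.card) :
    |med (a ::ₘ S) - med S| ≤ rightmed S - leftmed S := by
  have hn1 : S.card ≠ 1 := by omega
  have hcard : (a ::ₘ S).card = S.card + 1 := Multiset.card_cons a S
  have hn1' : (a ::ₘ S).card ≠ 1 := by omega
  set l := S.sort (· ≤ ·) with hl
  set L := (a ::ₘ S).sort (· ≤ ·) with hL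
  rcases Nat.even_or_odd S.card with ⟨k, hk⟩ | ⟨k, hk⟩
  · have hk2 : 2 ≤ k := by omega
    have hmS : med S = (l.getD (k - 1) 0 + l.getD k 0) / 2 := by
      rw [med, if_neg hn1, if_pos (by omega : S.card % 2 = 0),
        (by omega : S.card / 2 = k)]
    have hlS : leftmed S = l.getD (k - 1) 0 := by
      rw [leftmed, if_neg hn1, (by omega : S.card / 2 = k)]
    have hrS : rightmed S = l.getD k 0 := by
      rw [rightmed, if_neg hn1, if_pos (by omega : S.card % 2 = 0),
        (by omega : S.card / 2 = k)]
    have hmT : med (a ::ₘ S) = L.getD k 0 := by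
      rw [med, if_neg hn1', if_neg (by omega : ¬ (a ::ₘ S).card % 2 = 0),
        (by omega : (a ::ₘ S).card / 2 = k)]
    have h1 : L.getD k 0 ≤ l.getD k 0 := sort_cons_getD_le a S (by omega)
    have h2 : l.getD (k - 1) 0 ≤ L.getD k 0 := by
      have := getD_le_sort_cons a S (i := k - 1) (by omega)
      rwa [show k - 1 + 1 = k by omega] at this
    have h3 : l.getD (k - 1) 0 ≤ l.getD k 0 := le_trans h2 h1
    rw [hmS, hmT, hlS, hrS, abs_le]
    constructor <;> linarith
  · have hk1 : 1 ≤ k := by omega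
    have hmS : med S = l.getD k 0 := by
      rw [med, if_neg hn1, if_neg (by omega : ¬ S.card % 2 = 0),
        (by omega : S.card / 2 = k)]
    have hlS : leftmed S = l.getD (k - 1) 0 := by
      rw [leftmed, if_neg hn1, (by omega : S.card / 2 = k)]
    have hrS : rightmed S = l.getD (k + 1) 0 := by
      rw [rightmed, if_neg hn1, if_neg (by omega : ¬ S.card % 2 = 0),
        (by omega : S.card / 2 = k)]
    have hmT : med (a ::ₘ S) = (L.getD k 0 + L.getD (k + 1) 0) / 2 := by
      rw [med, if_neg hn1', if_pos (by omega : (a ::ₘ S).card % 2 = 0),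
        (by omega : (a ::ₘ S).card / 2 = k + 1), show k + 1 - 1 = k by omega]
    have h1 : L.getD k 0 ≤ l.getD k 0 := sort_cons_getD_le a S (by omega)
    have h2 : l.getD (k - 1) 0 ≤ L.getD k 0 := by
      have := getD_le_sort_cons a S (i := k - 1) (by omega)
      rwa [show k - 1 + 1 = k by omega] at this
    have h3 : L.getD (k + 1) 0 ≤ l.getD (k + 1) 0 := sort_cons_getD_le a S (by omega)
    have h4 : l.getD k 0 ≤ L.getD (k + 1) 0 := getD_le_sort_cons a S (by omega)
    have h5 : l.getD (k - 1) 0 ≤ l.getD k 0 := msort_mono S (by omega) (by omega)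
    have h6 : l.getD k 0 ≤ l.getD (k + 1) 0 := msort_mono S (by omega) (by omega)
    rw [hmS, hmT, hlS, hrS, abs_le]
    constructor <;> linarith

lemma med_erase (S : Multiset ℝ) (a : ℝ) (hS : 2 ≤ S.card) :
    |med S - med (a ::ₘ S)| ≤ rightmed (a ::ₘ S) - leftmed (a ::ₘ S) := by
  have hn1 : S.card ≠ 1 := by omega
  have hcard : (a ::ₘ S).card = S.card + 1 := Multiset.card_cons a S
  have hn1' : (a ::ₘ S).card ≠ 1 := by omega
  set l := S.sort (· ≤ ·) with hl
  set L := (a ::ₘ S).sort (· ≤ ·) with hL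
  rcases Nat.even_or_odd S.card with ⟨k, hk⟩ | ⟨k, hk⟩
  · -- S.card = 2k even, T.card = 2k+1 odd
    have hk1 : 1 ≤ k := by omega
    have hmS : med S = (l.getD (k - 1) 0 + l.getD k 0) / 2 := by
      rw [med, if_neg hn1, if_pos (by omega : S.card % 2 = 0),
        (by omega : S.card / 2 = k)]
    have hmT : med (a ::ₘ S) = L.getD k 0 := by
      rw [med, if_neg hn1', if_neg (by omega : ¬ (a ::ₘ S).card % 2 = 0),
        (by omega : (a ::ₘ S).card / 2 = k)]
    have hlT : leftmed (a ::ₘ S) = L.getD (k - 1) 0 := by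
      rw [leftmed, if_neg hn1', (by omega : (a ::ₘ S).card / 2 = k)]
    have hrT : rightmed (a ::ₘ S) = L.getD (k + 1) 0 := by
      rw [rightmed, if_neg hn1', if_neg (by omega : ¬ (a ::ₘ S).card % 2 = 0),
        (by omega : (a ::ₘ S).card / 2 = k)]
    have h1 : L.getD (k - 1) 0 ≤ l.getD (k - 1) 0 := sort_cons_getD_le a S (by omega)
    have h2 : l.getD (k - 1) 0 ≤ L.getD k 0 := by
      have := getD_le_sort_cons a S (i := k - 1) (by omega)
      rwa [show k - 1 + 1 = k by omega] at this
    have h3 : L.getD k 0 ≤ l.getD k 0 := sort_cons_getD_le a S (by omega)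
    have h4 : l.getD k 0 ≤ L.getD (k + 1) 0 := getD_le_sort_cons a S (by omega)
    have h5 : L.getD (k - 1) 0 ≤ L.getD k 0 := msort_mono _ (by omega) (by omega)
    have h6 : L.getD k 0 ≤ L.getD (k + 1) 0 := msort_mono _ (by omega) (by omega)
    rw [hmS, hmT, hlT, hrT, abs_le]
    constructor <;> linarith
  · -- S.card = 2k+1 odd (≥ 3 so k ≥ 1), T.card = 2k+2 even
    have hk1 : 1 ≤ k := by omega
    have hmS : med S = l.getD k 0 := by
      rw [med, if_neg hn1, if_neg (by omega : ¬ S.card % 2 = 0),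
        (by omega : S.card / 2 = k)]
    have hmT : med (a ::ₘ S) = (L.getD k 0 + L.getD (k + 1) 0) / 2 := by
      rw [med, if_neg hn1', if_pos (by omega : (a ::ₘ S).card % 2 = 0),
        (by omega : (a ::ₘ S).card / 2 = k + 1), show k + 1 - 1 = k by omega]
    have hlT : leftmed (a ::ₘ S) = L.getD k 0 := by
      rw [leftmed, if_neg hn1', (by omega : (a ::ₘ S).card / 2 = k + 1),
        show k + 1 - 1 = k by omega]
    have hrT : rightmed (a ::ₘ S) = L.getD (k + 1) 0 := by
      rw [rightmed, if_neg hn1', if_pos (by omega : (a ::ₘ S).card % 2 = 0),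
        (by omega : (a ::ₘ S).card / 2 = k + 1)]
    have h1 : L.getD k 0 ≤ l.getD k 0 := sort_cons_getD_le a S (by omega)
    have h2 : l.getD k 0 ≤ L.getD (k + 1) 0 := getD_le_sort_cons a S (by omega)
    have h3 : L.getD k 0 ≤ L.getD (k + 1) 0 := msort_mono _ (by omega) (by omega)
    rw [hmS, hmT, hlT, hrT, abs_le]
    constructor <;> linarith

/-- For neighboring finite multisets `Z, Z'` of vectors in `ℝ^X`
    with `|Z| ≥ 3`: for every `x ∈ X`,
    `|med(Z')_x − med(Z)_x| ≤ rightmed(Z)_x − leftmed(Z)_x`,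
    i.e. the local sensitivity of the componentwise median is bounded by the median gap. -/
theorem abs_medVec_sub_le_median_gap
    {X : Type*} [Fintype X] [Nonempty X]
    (Z Z' : Multiset (X → ℝ)) (hZZ' : Neighbors Z Z') (hZ : 3 ≤ Z.card) :
    ∀ x : X, |medVec Z' x - medVec Z x| ≤ rightmedVec Z x - leftmedVec Z x := by
  intro x
  have hcc : ∀ (W : Multiset (X → ℝ)), (compAt W x).card = W.card :=
    fun W => Multiset.card_map _ W
  rcases hZZ' with ⟨z, rfl⟩ | ⟨z, rfl⟩
  · have hmap : compAt (z ::ₘ Z) x = z x ::ₘ compAt Z x := Multiset.map_cons _ _ _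
    simp only [medVec, rightmedVec, leftmedVec, hmap]
    exact med_insert _ _ (by rw [hcc]; exact hZ)
  · have hmap : compAt (z ::ₘ Z') x = z x ::ₘ compAt Z' x := Multiset.map_cons _ _ _
    simp only [medVec, rightmedVec, leftmedVec, hmap]
    exact med_erase _ _ (by rw [hcc]; have := hZ; rw [Multiset.card_cons] at this; omega)
end

section
/- Let X be a finite nonempty set, let τ > 0, and let Z and Z' be neighboring finite multisets of vectors z : X → ℝ with |Z| ≥ 3 and |Z'| ≥ 3. Then for every x ∈ X, exp(−γ(Z, x)) ≤ softmax_τ(med(Z))(x) / softmax_τ(med(Z'))(x) ≤ exp(γ(Z, x)). -/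
open Real

/-- `softmax_τ(z)(x) = exp(z_x/τ) / Σ_y exp(z_y/τ)`. -/
noncomputable def softmax {X : Type*} [Fintype X] (τ : ℝ) (z : X → ℝ) (x : X) : ℝ :=
  Real.exp (z x / τ) / ∑ y, Real.exp (z y / τ)
/-- `α(Z, x) = exp((z̄_x − z̄^R_x)/τ) · (Σ_y exp(z̄^L_y/τ)) / (Σ_y exp(z̄_y/τ))`
    where `z̄ = med(Z)`, `z̄^L = leftmed(Z)`, `z̄^R = rightmed(Z)`. -/
noncomputable def alpha {X : Type*} [Fintype X] (τ : ℝ) (Z : Multiset (X → ℝ)) (x : X) : ℝ :=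
  Real.exp ((medVec Z x - rightmedVec Z x) / τ) *
    (∑ y, Real.exp (leftmedVec Z y / τ)) / (∑ y, Real.exp (medVec Z y / τ))

/-- `β(Z, x) = exp((z̄_x − z̄^L_x)/τ) · (Σ_y exp(z̄^R_y/τ)) / (Σ_y exp(z̄_y/τ))`. -/
noncomputable def beta {X : Type*} [Fintype X] (τ : ℝ) (Z : Multiset (X → ℝ)) (x : X) : ℝ :=
  Real.exp ((medVec Z x - leftmedVec Z x) / τ) *
    (∑ y, Real.exp (rightmedVec Z y / τ)) / (∑ y, Real.exp (medVec Z y / τ))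

/-- Per-token privacy cost `γ(Z, x) = max(log(1/α(Z, x)), log β(Z, x))`. -/
noncomputable def gamma {X : Type*} [Fintype X] (τ : ℝ) (Z : Multiset (X → ℝ)) (x : X) : ℝ :=
  max (Real.log (1 / alpha τ Z x)) (Real.log (beta τ Z x))


private lemma smono_add {f : ℕ → ℕ} (hf : StrictMono f) (i d : ℕ) : f i + d ≤ f (i + d) := by
  induction d with
  | zero => simp
  | succ d ih =>
    have h1 := hf (Nat.lt_succ_self (i + d))
    have h2 : i + (d + 1) = (i + d) + 1 := by omega
    rw [h2]
    simp only [Nat.succ_eq_add_one] at h1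
    omega

private lemma sorted_sublist_bounds {l m : List ℝ} (hm : m.Pairwise (· ≤ ·))
    (hsub : l.Sublist m) (hlen : m.length = l.length + 1) {i : ℕ} (hi : i < l.length) :
    m.getD i 0 ≤ l.getD i 0 ∧ l.getD i 0 ≤ m.getD (i+1) 0 := by
  obtain ⟨f, hf⟩ := List.sublist_iff_exists_orderEmbedding_getElem?_eq.mp hsub
  have hfm : StrictMono f := f.strictMono
  have hfi := hf i
  rw [List.getElem?_eq_getElem hi, eq_comm, List.getElem?_eq_some_iff] at hfi
  obtain ⟨hflt, heq'⟩ := hfi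
  have heq : l.get ⟨i, hi⟩ = m.get ⟨f i, hflt⟩ := heq'.symm
  have h1 : i ≤ f i := by
    have h0 := smono_add hfm 0 i
    simp only [Nat.zero_add] at h0
    omega
  have h2 : f i ≤ i + 1 := by
    have hd := smono_add hfm i (l.length - 1 - i)
    have he : i + (l.length - 1 - i) = l.length - 1 := by omega
    rw [he] at hd
    have hlast : l.length - 1 < l.length := by omega
    have hfl := hf (l.length - 1)
    rw [List.getElem?_eq_getElem hlast, eq_comm, List.getElem?_eq_some_iff] at hfl
    obtain ⟨hfll, -⟩ := hfl
    omega
  have hi1 : i + 1 < m.length := by omega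
  have him : i < m.length := by omega
  constructor
  · have hle : m.get ⟨i, him⟩ ≤ m.get ⟨f i, hflt⟩ := hm.rel_get_of_le (by simpa using h1)
    rw [List.getD_eq_getElem _ _ him, List.getD_eq_getElem _ _ hi]
    simpa [← heq'] using hle
  · have hle : m.get ⟨f i, hflt⟩ ≤ m.get ⟨i+1, hi1⟩ := hm.rel_get_of_le (by simpa using h2)
    rw [List.getD_eq_getElem _ _ hi1, List.getD_eq_getElem _ _ hi]
    simpa [← heq'] using hle

private lemma sort_sublist_cons (a : ℝ) (S : Multiset ℝ) :
    (S.sort (· ≤ ·)).Sublist ((a ::ₘ S).sort (· ≤ ·)) := by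
  apply List.sublist_of_subperm_of_pairwise _ (S.pairwise_sort _) ((a ::ₘ S).pairwise_sort _)
  rw [← Multiset.coe_le, Multiset.sort_eq, Multiset.sort_eq]
  exact Multiset.le_cons_self _ _

private lemma cons_bounds (a : ℝ) (S : Multiset ℝ) {i : ℕ} (hi : i < S.card) :
    ((a ::ₘ S).sort (· ≤ ·)).getD i 0 ≤ (S.sort (· ≤ ·)).getD i 0 ∧
      (S.sort (· ≤ ·)).getD i 0 ≤ ((a ::ₘ S).sort (· ≤ ·)).getD (i+1) 0 := by
  apply sorted_sublist_bounds ((a ::ₘ S).pairwise_sort _) (sort_sublist_cons a S)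
  · rw [Multiset.length_sort, Multiset.length_sort, Multiset.card_cons]
  · rw [Multiset.length_sort]; exact hi

private lemma med_between {S S' : Multiset ℝ} (h : Neighbors S S')
    (hS : 3 ≤ S.card) (hS' : 3 ≤ S'.card) :
    leftmed S ≤ med S' ∧ med S' ≤ rightmed S := by
  rcases h with ⟨a, ha⟩ | ⟨a, ha⟩
  · -- S' = a ::ₘ S
    subst ha
    have hcard' : (a ::ₘ S).card = S.card + 1 := Multiset.card_cons _ _
    have hne1 : ¬ S.card = 1 := by omega
    have hne1' : ¬ (a ::ₘ S).card = 1 := by omega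
    unfold leftmed med rightmed
    rw [if_neg hne1, if_neg hne1, if_neg hne1', hcard']
    rcases Nat.even_or_odd S.card with he | ho
    · obtain ⟨k, hk⟩ := he
      have hpar : ¬ (S.card + 1) % 2 = 0 := by omega
      have hpar2 : S.card % 2 = 0 := by omega
      rw [if_pos hpar2, if_neg hpar]
      have e1 : (S.card + 1) / 2 = k := by omega
      have e2 : S.card / 2 - 1 = k - 1 := by omega
      have e3 : S.card / 2 = k := by omega
      rw [e1, e2, e3]
      have b1 := cons_bounds a S (i := k - 1) (by omega)
      have b2 := cons_bounds a S (i := k) (by omega)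
      have ek : k - 1 + 1 = k := by omega
      rw [ek] at b1
      exact ⟨b1.2, b2.1⟩
    · obtain ⟨k, hk⟩ := ho
      have hpar : (S.card + 1) % 2 = 0 := by omega
      have hpar2 : ¬ S.card % 2 = 0 := by omega
      rw [if_neg hpar2, if_pos hpar]
      have e1 : (S.card + 1) / 2 - 1 = k := by omega
      have e2 : (S.card + 1) / 2 = k + 1 := by omega
      have e3 : S.card / 2 - 1 = k - 1 := by omega
      have e4 : S.card / 2 + 1 = k + 1 := by omega
      rw [e1, e2, e3, e4]
      have b1 := cons_bounds a S (i := k - 1) (by omega)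
      have b2 := cons_bounds a S (i := k) (by omega)
      have b3 := cons_bounds a S (i := k + 1) (by omega)
      have ek : k - 1 + 1 = k := by omega
      rw [ek] at b1
      constructor
      · linarith [b1.2, b2.1, b2.2]
      · linarith [b2.1, b2.2, b3.1]
  · -- S = a ::ₘ S'
    subst ha
    have hcard : (a ::ₘ S').card = S'.card + 1 := Multiset.card_cons _ _
    have hne1 : ¬ S'.card = 1 := by omega
    have hne1' : ¬ (a ::ₘ S').card = 1 := by omega
    unfold leftmed med rightmed
    rw [if_neg hne1', if_neg hne1, if_neg hne1', hcard]
    rcases Nat.even_or_odd S'.card with he | ho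
    · obtain ⟨k, hk⟩ := he
      have hpar : ¬ (S'.card + 1) % 2 = 0 := by omega
      have hpar2 : S'.card % 2 = 0 := by omega
      rw [if_pos hpar2, if_neg hpar]
      have e1 : (S'.card + 1) / 2 - 1 = k - 1 := by omega
      have e2 : (S'.card + 1) / 2 = k := by omega
      have e3 : S'.card / 2 - 1 = k - 1 := by omega
      have e4 : S'.card / 2 = k := by omega
      rw [e1, e2, e3, e4]
      have b1 := cons_bounds a S' (i := k - 1) (by omega)
      have b2 := cons_bounds a S' (i := k) (by omega)
      have ek : k - 1 + 1 = k := by omega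
      rw [ek] at b1
      constructor
      · linarith [b1.1, b1.2, b2.1]
      · linarith [b1.2, b2.1, b2.2]
    · obtain ⟨k, hk⟩ := ho
      have hpar : (S'.card + 1) % 2 = 0 := by omega
      have hpar2 : ¬ S'.card % 2 = 0 := by omega
      rw [if_neg hpar2, if_pos hpar]
      have e1 : (S'.card + 1) / 2 - 1 = k := by omega
      have e2 : (S'.card + 1) / 2 = k + 1 := by omega
      have e3 : S'.card / 2 = k := by omega
      rw [e1, e2, e3]
      have b1 := cons_bounds a S' (i := k) (by omega)
      exact ⟨b1.1, b1.2⟩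

/-- For neighboring finite multisets `Z, Z'` of vectors in `ℝ^X` with
    `|Z| ≥ 3` and `|Z'| ≥ 3`: for every `x ∈ X`,
    `exp(−γ(Z, x)) ≤ softmax_τ(med(Z))(x) / softmax_τ(med(Z'))(x) ≤ exp(γ(Z, x))`. -/
theorem softmax_med_ratio_bounded_by_gamma
    {X : Type*} [Fintype X] [Nonempty X] (τ : ℝ) (hτ : 0 < τ)
    (Z Z' : Multiset (X → ℝ)) (hZZ' : Neighbors Z Z')
    (hZ : 3 ≤ Z.card) (hZ' : 3 ≤ Z'.card) :
    ∀ x : X,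
      Real.exp (-(gamma τ Z x)) ≤ softmax τ (medVec Z) x / softmax τ (medVec Z') x ∧
      softmax τ (medVec Z) x / softmax τ (medVec Z') x ≤ Real.exp (gamma τ Z x) := by
  intro x
  have key : ∀ y : X, leftmedVec Z y ≤ medVec Z' y ∧ medVec Z' y ≤ rightmedVec Z y := by
    intro y
    apply med_between
    · rcases hZZ' with ⟨a, ha⟩ | ⟨a, ha⟩
      · left; exact ⟨a y, by rw [ha]; simp [compAt]⟩
      · right; exact ⟨a y, by rw [ha]; simp [compAt]⟩
    · simpa [compAt] using hZ
    · simpa [compAt] using hZ'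
  have hSM : 0 < ∑ y, Real.exp (medVec Z y / τ) :=
    Finset.sum_pos (fun y _ => Real.exp_pos _) Finset.univ_nonempty
  have hSM' : 0 < ∑ y, Real.exp (medVec Z' y / τ) :=
    Finset.sum_pos (fun y _ => Real.exp_pos _) Finset.univ_nonempty
  have hSL : 0 < ∑ y, Real.exp (leftmedVec Z y / τ) :=
    Finset.sum_pos (fun y _ => Real.exp_pos _) Finset.univ_nonempty
  have hSR : 0 < ∑ y, Real.exp (rightmedVec Z y / τ) :=
    Finset.sum_pos (fun y _ => Real.exp_pos _) Finset.univ_nonempty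
  have hratio : softmax τ (medVec Z) x / softmax τ (medVec Z') x
      = Real.exp ((medVec Z x - medVec Z' x) / τ) * (∑ y, Real.exp (medVec Z' y / τ))
        / (∑ y, Real.exp (medVec Z y / τ)) := by
    unfold softmax
    rw [sub_div, Real.exp_sub]
    field_simp
  have halpha : 0 < alpha τ Z x := by
    unfold alpha
    exact div_pos (mul_pos (Real.exp_pos _) hSL) hSM
  have hbeta : 0 < beta τ Z x := by
    unfold beta
    exact div_pos (mul_pos (Real.exp_pos _) hSR) hSM
  have hup : softmax τ (medVec Z) x / softmax τ (medVec Z') x ≤ beta τ Z x := by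
    rw [hratio]
    unfold beta
    gcongr
    · exact (key x).1
    · exact (key _).2
  have hlo : alpha τ Z x ≤ softmax τ (medVec Z) x / softmax τ (medVec Z') x := by
    rw [hratio]
    unfold alpha
    gcongr
    · exact (key x).2
    · exact (key _).1
  constructor
  · calc Real.exp (-(gamma τ Z x)) ≤ alpha τ Z x := by
          rw [← Real.exp_log halpha]
          apply Real.exp_le_exp.mpr
          have h1 : Real.log (1 / alpha τ Z x) ≤ gamma τ Z x := le_max_left _ _
          rw [one_div, Real.log_inv] at h1
          linarith
      _ ≤ _ := hlo
  · calc softmax τ (medVec Z) x / softmax τ (medVec Z') x ≤ beta τ Z x := hup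
      _ ≤ Real.exp (gamma τ Z x) := by
          rw [← Real.exp_log hbeta]
          exact Real.exp_le_exp.mpr (le_max_right _ _)
end
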